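/- Let n ≥ 2 and A ∈ M_n(ℂ) nonzero nilpotent, with V as above (V v₂ = v₁, V v₁ = v₂, V v_j = 0 for j ≥ 3, where A v₂ = v₁, A v₁ = 0). Then the spectral radius satisfies ρ(A + ζV) ≥ √(|ζ||1+ζ|) for all ζ ∈ ℂ, and in particular ρ(A + ζV)/|ζ| → ∞ as ζ → 0. -/

import Mathlib

open Matrix Filter

/-- Spectral radius of a complex matrix. -/
noncomputable def rho {n : ℕ} (A : Matrix (Fin n) (Fin n) ℂ) : ℝ :=
  sSup ((fun z : ℂ => ‖z‖) '' spectrum ℂ A)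

lemma abs_le_rho {n : ℕ} {M : Matrix (Fin n) (Fin n) ℂ} {μ : ℂ}
    (h : μ ∈ spectrum ℂ M) : ‖μ‖ ≤ rho M :=
  le_csSup ((M.finite_spectrum.image _).bddAbove) (Set.mem_image_of_mem _ h)

lemma mem_spec {n : ℕ} (M : Matrix (Fin n) (Fin n) ℂ) (μ : ℂ) (v : Fin n → ℂ) (hv : v ≠ 0)
    (h : M.mulVec v = μ • v) : μ ∈ spectrum ℂ M := by
  rw [← AlgEquiv.spectrum_eq (Matrix.toLinAlgEquiv' : Matrix (Fin n) (Fin n) ℂ ≃ₐ[ℂ] _) M]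
  exact (Module.End.hasEigenvalue_of_hasEigenvector
    ⟨Module.End.mem_eigenspace_iff.mpr (by simpa using h), hv⟩).mem_spectrum


/-- in the setting of Statement 8, `ρ(A + ζV) ≥ √(|ζ||1+ζ|)` for all
`ζ ∈ ℂ`, and `ρ(A + ζV)/|ζ| → ∞` as `ζ → 0`. -/
theorem perturbation_rho_lower (n : ℕ) (hn : 2 ≤ n)
    (A V : Matrix (Fin n) (Fin n) ℂ) (hnil : IsNilpotent A) (hA : A ≠ 0)
    (b : Module.Basis (Fin n) ℂ (Fin n → ℂ))
    (hA1 : A.mulVec (b ⟨1, by omega⟩) = b ⟨0, by omega⟩)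
    (hA0 : A.mulVec (b ⟨0, by omega⟩) = 0)
    (hV1 : V.mulVec (b ⟨1, by omega⟩) = b ⟨0, by omega⟩)
    (hV0 : V.mulVec (b ⟨0, by omega⟩) = b ⟨1, by omega⟩)
    (hVj : ∀ j : Fin n, j ≠ ⟨0, by omega⟩ → j ≠ ⟨1, by omega⟩ → V.mulVec (b j) = 0) :
    (∀ ζ : ℂ, Real.sqrt (‖ζ‖ * ‖1 + ζ‖) ≤ rho (A + ζ • V)) ∧
    Tendsto (fun ζ : ℂ => rho (A + ζ • V) / ‖ζ‖)
      (nhdsWithin 0 {0}ᶜ) atTop := by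
  haveI : Nontrivial (Fin n) := ⟨⟨⟨0, by omega⟩, ⟨1, by omega⟩, by simp⟩⟩
  have key : ∀ ζ : ℂ, Real.sqrt (‖ζ‖ * ‖1 + ζ‖) ≤ rho (A + ζ • V) := by
    intro ζ
    rcases eq_or_ne ζ 0 with rfl | hζ
    · simp only [map_zero, zero_mul, Real.sqrt_zero, zero_smul, add_zero]
      have h0 : (0 : ℂ) ∈ spectrum ℂ A := by
        rw [spectrum.zero_mem_iff]
        exact fun hu => hnil.not_isUnit hu
      simpa using abs_le_rho h0
    · obtain ⟨lam, hlam⟩ := IsAlgClosed.exists_pow_nat_eq (ζ * (1 + ζ)) (two_pos)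
      set v : Fin n → ℂ := lam • b ⟨0, by omega⟩ + ζ • b ⟨1, by omega⟩ with hv
      have hvne : v ≠ 0 := by
        intro h
        have := congrArg (fun w => b.repr w ⟨1, by omega⟩) h
        simp [hv, Module.Basis.repr_self, Finsupp.single_apply, show (⟨0, by omega⟩ : Fin n) ≠ ⟨1, by omega⟩ by simp] at this
        exact hζ this
      have heig : (A + ζ • V).mulVec v = lam • v := by
        simp only [hv, Matrix.mulVec_add, Matrix.mulVec_smul, Matrix.add_mulVec,
          Matrix.smul_mulVec, hA0, hA1, hV0, hV1]
        have hll : lam * lam = ζ + ζ * ζ := by linear_combination hlam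
        simp only [smul_zero, zero_add, smul_add, smul_smul, hll]
        module
      have hmem := mem_spec _ _ _ hvne heig
      have habs : ‖ζ‖ * ‖1 + ζ‖ = ‖lam‖ ^ 2 := by
        rw [← norm_pow, hlam, norm_mul]
      rw [habs, Real.sqrt_sq (norm_nonneg _)]
      exact abs_le_rho hmem
  refine ⟨key, ?_⟩
  have hlow : Tendsto (fun ζ : ℂ => Real.sqrt (‖1 + ζ‖) / Real.sqrt (‖ζ‖))
      (nhdsWithin 0 {0}ᶜ) atTop := by
    have h1 : Tendsto (fun ζ : ℂ => Real.sqrt (‖1 + ζ‖))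
        (nhdsWithin 0 {0}ᶜ) (nhds 1) := by
      have : Tendsto (fun ζ : ℂ => Real.sqrt (‖1 + ζ‖)) (nhds 0) (nhds 1) := by
        have hc : Continuous (fun ζ : ℂ => Real.sqrt (‖1 + ζ‖)) := by continuity
        simpa using hc.tendsto (0 : ℂ)
      exact this.mono_left nhdsWithin_le_nhds
    have h2 : Tendsto (fun ζ : ℂ => Real.sqrt (‖ζ‖))
        (nhdsWithin 0 {0}ᶜ) (nhdsWithin 0 (Set.Ioi 0)) := by
      rw [tendsto_nhdsWithin_iff]
      constructor
      · have : Tendsto (fun ζ : ℂ => Real.sqrt (‖ζ‖)) (nhds 0) (nhds 0) := by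
          have hc : Continuous (fun ζ : ℂ => Real.sqrt (‖ζ‖)) := by continuity
          simpa using hc.tendsto (0 : ℂ)
        exact this.mono_left nhdsWithin_le_nhds
      · filter_upwards [self_mem_nhdsWithin] with ζ hζ
        exact Real.sqrt_pos.mpr (by simpa using hζ)
    have := Filter.Tendsto.pos_mul_atTop one_pos h1 h2.inv_tendsto_nhdsGT_zero
    simpa [div_eq_mul_inv] using this
  refine tendsto_atTop_mono' _ ?_ hlow
  filter_upwards [self_mem_nhdsWithin] with ζ hζ
  have hζ0 : ‖ζ‖ > 0 := by simpa using hζ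
  have : Real.sqrt (‖ζ‖ * ‖1 + ζ‖) / ‖ζ‖
      = Real.sqrt (‖1 + ζ‖) / Real.sqrt (‖ζ‖) := by
    have ha : Real.sqrt (‖ζ‖) ≠ 0 := Real.sqrt_ne_zero'.mpr hζ0
    rw [Real.sqrt_mul (norm_nonneg _)]
    nth_rewrite 2 [← Real.mul_self_sqrt hζ0.le]
    rw [mul_div_mul_left _ _ ha]
  rw [← this]
  gcongr
  exact key ζ
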